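/- arXiv:1411.4693 — 3 statements merged into one kernel-verified Lean document; each statement's English description precedes it below -/
import Mathlib

section
/- Mutation of weight configurations is well-defined and involutive: if σ is a weight configuration on an ice quiver Δ (i.e., Bσ = 0 as matrices, where rows of σ are the weight vectors), then the mutated configuration σ' = φσ satisfies B'σ' = 0 for the mutated B-matrix B' = φ_p^T B φ, and mutating σ' again at the same vertex recovers σ. -/
open Matrix

/-- Mutation of weight configurations is well-defined and involutive: if `σ` is a
weight configuration on an ice quiver with `B`-matrix `B` (i.e. `B σ = 0`, rows of `σ`
being the weight vectors) and `φ` is the involutive `q × q` mutation matrix at a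
mutable vertex, then the mutated configuration `σ' = φ σ` satisfies `B' σ' = 0` for
the mutated `B`-matrix `B' = φ_pᵀ B φ`, and mutating `σ'` again recovers `σ`. -/
theorem stmt_6 (p q m : ℕ) (h : p ≤ q)
    (B : Matrix (Fin p) (Fin q) ℤ) (σ : Matrix (Fin q) (Fin m) ℤ)
    (φ : Matrix (Fin q) (Fin q) ℤ) (hφ : φ * φ = 1) (hσ : B * σ = 0)
    (φp : Matrix (Fin p) (Fin p) ℤ)
    (hφp : φp = Matrix.of fun v w => φ (Fin.castLE h v) (Fin.castLE h w)) :
    (φpᵀ * B * φ) * (φ * σ) = 0 ∧ φ * (φ * σ) = σ := by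
  constructor
  · calc (φpᵀ * B * φ) * (φ * σ) = φpᵀ * B * (φ * φ) * σ := by
          simp only [Matrix.mul_assoc]
    _ = 0 := by rw [hφ, Matrix.mul_one, Matrix.mul_assoc, hσ, Matrix.mul_zero]
  · rw [← Matrix.mul_assoc, hφ, Matrix.one_mul]
end

section
/- For the ice hive quiver Δ_n (n ≥ 3), the B-matrix B(Δ_n) has full rank (rank equal to the number of mutable vertices, binomial(n−1,2)). -/
/-- Vertices of the ice hive quiver `Δ_n`: pairs `(i,j)` with `i + j ≤ n`,
excluding the three corners `(0,0)`, `(0,n)`, `(n,0)`. -/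
abbrev HiveVertex (n : ℕ) : Type :=
  {p : Fin (n + 1) × Fin (n + 1) // (p.1 : ℕ) + (p.2 : ℕ) ≤ n ∧
    (p.1 : ℕ) + (p.2 : ℕ) ≠ 0 ∧ ¬((p.1 : ℕ) = 0 ∧ (p.2 : ℕ) = n) ∧
    ¬((p.1 : ℕ) = n ∧ (p.2 : ℕ) = 0)}

/-- Mutable vertices of `Δ_n`: interior vertices `(i,j)` with `i, j ≥ 1`,
`i + j ≤ n - 1`. -/
abbrev HiveMutable (n : ℕ) : Type :=
  {p : Fin (n + 1) × Fin (n + 1) // 1 ≤ (p.1 : ℕ) ∧ 1 ≤ (p.2 : ℕ) ∧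
    (p.1 : ℕ) + (p.2 : ℕ) + 1 ≤ n}

/-- Number of arrows from `s` to `t` in the hive quiver: northeast arrows
`(i,j) → (i,j-1)`, southeast arrows `(i,j) → (i+1,j)`, and west arrows
`(i+1,j-1) → (i,j)`. -/
def hiveArrows (s t : ℕ × ℕ) : ℤ :=
  (if 1 ≤ s.2 ∧ t = (s.1, s.2 - 1) then 1 else 0) +
  (if t = (s.1 + 1, s.2) then 1 else 0) +
  (if 1 ≤ t.2 ∧ s = (t.1 + 1, t.2 - 1) then 1 else 0)

/-- The `B`-matrix of the ice hive quiver `Δ_n`, with rows indexed by mutable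
vertices: `b_{u,v} = #arrows(u → v) - #arrows(v → u)`. -/
def hiveB (n : ℕ) : Matrix (HiveMutable n) (HiveVertex n) ℚ :=
  Matrix.of fun u v =>
    ((hiveArrows ((u.1.1 : ℕ), (u.1.2 : ℕ)) ((v.1.1 : ℕ), (v.1.2 : ℕ)) -
      hiveArrows ((v.1.1 : ℕ), (v.1.2 : ℕ)) ((u.1.1 : ℕ), (u.1.2 : ℕ)) : ℤ) : ℚ)

lemma hive_entry_diag (i j : ℕ) (hi : 1 ≤ i) (hj : 1 ≤ j) :
    hiveArrows (i, j) (i - 1, j + 1) - hiveArrows (i - 1, j + 1) (i, j) = 1 := by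
  simp only [hiveArrows, Prod.mk.injEq]
  split_ifs <;> omega

lemma hive_entry_zero (n i j a b : ℕ) (hi : 1 ≤ i) (hj : 1 ≤ j) (hij : i + j + 1 ≤ n)
    (ha : 1 ≤ a) (hb : 1 ≤ b) (hab : a + b + 1 ≤ n)
    (h : i < a ∨ (i = a ∧ n - j < n - b)) :
    hiveArrows (a, b) (i - 1, j + 1) - hiveArrows (i - 1, j + 1) (a, b) = 0 := by
  simp only [hiveArrows, Prod.mk.injEq]
  split_ifs <;> omega

/-- The column associated to a mutable vertex `(i,j)`: the vertex `(i-1, j+1)`. -/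
def hiveC (n : ℕ) (u : HiveMutable n) : HiveVertex n :=
  ⟨(⟨(u.1.1 : ℕ) - 1, by have := u.1.1.isLt; omega⟩,
    ⟨(u.1.2 : ℕ) + 1, by have := u.2; omega⟩), by
      have h := u.2
      have h1 := u.1.1.isLt
      simp only [Fin.val_mk]
      omega⟩

/-- The lexicographic key used to order mutable vertices. -/
def hiveKey (n : ℕ) (u : HiveMutable n) : ℕ ×ₗ ℕ :=
  toLex ((u.1.1 : ℕ), n - (u.1.2 : ℕ))

lemma hiveKey_inj (n : ℕ) : Function.Injective (hiveKey n) := by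
  intro u v huv
  have h1 : ((u.1.1 : ℕ), n - (u.1.2 : ℕ)) = ((v.1.1 : ℕ), n - (v.1.2 : ℕ)) :=
    toLex.injective huv
  have hu := u.2
  have hv := v.2
  simp only [Prod.mk.injEq] at h1
  apply Subtype.ext
  apply Prod.ext <;> apply Fin.ext <;> omega

lemma card_hiveMutable (n : ℕ) (hn : 3 ≤ n) :
    Fintype.card (HiveMutable n) = (n - 1).choose 2 := by
  classical
  rw [Fintype.card_subtype]
  have h1 : (Finset.univ.filter (fun p : Fin (n+1) × Fin (n+1) =>
      1 ≤ (p.1 : ℕ) ∧ 1 ≤ (p.2 : ℕ) ∧ (p.1 : ℕ) + (p.2 : ℕ) + 1 ≤ n)).card =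
      ((Finset.range (n+1) ×ˢ Finset.range (n+1)).filter
        (fun q : ℕ × ℕ => 1 ≤ q.1 ∧ 1 ≤ q.2 ∧ q.1 + q.2 + 1 ≤ n)).card := by
    apply Finset.card_nbij (fun p => ((p.1 : ℕ), (p.2 : ℕ)))
    · intro p hp
      simp only [Finset.mem_coe, Finset.mem_filter, Finset.mem_univ, true_and] at hp
      simp only [Finset.mem_coe, Finset.mem_filter, Finset.mem_product, Finset.mem_range]
      exact ⟨⟨p.1.isLt, p.2.isLt⟩, hp⟩
    · intro p _ q _ hpq
      simp only [Prod.mk.injEq] at hpq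
      exact Prod.ext (Fin.ext hpq.1) (Fin.ext hpq.2)
    · intro q hq
      simp only [Finset.coe_filter, Set.mem_setOf_eq, Finset.mem_product,
        Finset.mem_range] at hq
      refine ⟨(⟨q.1, hq.1.1⟩, ⟨q.2, hq.1.2⟩), ?_, rfl⟩
      simp only [Finset.coe_filter, Set.mem_setOf_eq, Finset.mem_univ, true_and]
      exact hq.2
  rw [h1]
  rw [Finset.card_eq_sum_card_fiberwise (f := Prod.fst) (t := Finset.range (n+1))
    (fun x hx => by
      simp only [Finset.mem_coe, Finset.mem_filter, Finset.mem_product] at hx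
      exact hx.1.1)]
  have h2 : ∀ i ∈ Finset.range (n+1),
      (((Finset.range (n+1) ×ˢ Finset.range (n+1)).filter
        (fun q : ℕ × ℕ => 1 ≤ q.1 ∧ 1 ≤ q.2 ∧ q.1 + q.2 + 1 ≤ n)).filter
        (fun p => p.1 = i)).card = (if 1 ≤ i then n - 1 - i else 0) := by
    intro i _
    by_cases hi : 1 ≤ i
    · rw [if_pos hi]
      have key : (((Finset.range (n+1) ×ˢ Finset.range (n+1)).filter
          (fun q : ℕ × ℕ => 1 ≤ q.1 ∧ 1 ≤ q.2 ∧ q.1 + q.2 + 1 ≤ n)).filter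
          (fun p => p.1 = i)).card = (Finset.Icc 1 (n - 1 - i)).card := by
        apply Finset.card_nbij (fun p => p.2)
        · intro p hp
          simp only [Finset.mem_coe, Finset.mem_filter, Finset.mem_product, Finset.mem_range] at hp
          simp only [Finset.mem_coe, Finset.mem_Icc]
          omega
        · intro p hp q hq hpq
          simp only [Finset.coe_filter, Set.mem_setOf_eq] at hp hq
          exact Prod.ext (hp.2.trans hq.2.symm) hpq
        · intro j hj
          simp only [Finset.coe_Icc, Set.mem_Icc] at hj
          refine ⟨(i, j), ?_, rfl⟩
          simp only [Finset.coe_filter, Set.mem_setOf_eq, Finset.mem_filter,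
            Finset.mem_product, Finset.mem_range, and_true, eq_self_iff_true]
          omega
      rw [key, Nat.card_Icc]
      omega
    · rw [if_neg hi]
      rw [Finset.card_eq_zero, Finset.filter_eq_empty_iff]
      intro p hp
      simp only [Finset.mem_filter] at hp
      omega
  rw [Finset.sum_congr rfl h2]
  rw [Finset.sum_range_succ']
  have h3 : ∀ i ∈ Finset.range n,
      (if 1 ≤ i + 1 then n - 1 - (i + 1) else 0) = (fun j => j - 1) (n - 1 - i) := by
    intro i hi; simp only [Finset.mem_range] at hi
    rw [if_pos (by omega)]; simp only; omega
  rw [Finset.sum_congr rfl h3, Finset.sum_range_reflect (fun j => j - 1) n,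
    if_neg (by omega : ¬ (1:ℕ) ≤ 0), add_zero]
  have h4 : ∀ k : ℕ, ∑ j ∈ Finset.range (k+1), (j - 1) = ∑ j ∈ Finset.range k, j := by
    intro k
    induction k with
    | zero => simp
    | succ m ih => rw [Finset.sum_range_succ, ih, Finset.sum_range_succ]; omega
  obtain ⟨m, rfl⟩ : ∃ m, n = m + 3 := ⟨n - 3, by omega⟩
  rw [show m + 3 = (m + 2) + 1 from rfl, h4]
  have h5 : (∑ i ∈ Finset.range (m + 2), i) * 2 = (m + 2) * (m + 1) := by
    simpa using Finset.sum_range_id_mul_two (m + 2)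
  rw [Nat.choose_two_right]
  norm_num
  omega

/-- The `B`-matrix of the ice hive quiver `Δ_n` has full rank, equal to the number
`(n-1).choose 2` of mutable vertices. -/
theorem stmt_8 (n : ℕ) (hn : 3 ≤ n) :
    (hiveB n).rank = (n - 1).choose 2 := by
  classical
  letI : LinearOrder (HiveMutable n) := LinearOrder.lift' (hiveKey n) (hiveKey_inj n)
  set M : Matrix (HiveMutable n) (HiveMutable n) ℚ :=
    (hiveB n).submatrix id (hiveC n) with hM
  have htri : M.BlockTriangular (hiveKey n) := by
    intro u v huv
    have hlt : hiveKey n v < hiveKey n u := huv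
    rw [hiveKey, hiveKey, Prod.Lex.lt_iff] at hlt
    simp only [hM, Matrix.submatrix_apply, id_eq, hiveB, Matrix.of_apply, hiveC, Fin.val_mk]
    have hz := hive_entry_zero n (v.1.1 : ℕ) (v.1.2 : ℕ) (u.1.1 : ℕ) (u.1.2 : ℕ)
      v.2.1 v.2.2.1 v.2.2.2 u.2.1 u.2.2.1 u.2.2.2 hlt
    rw [hz]
    exact Int.cast_zero
  have hdiag : ∀ u, M u u = 1 := by
    intro u
    simp only [hM, Matrix.submatrix_apply, id_eq, hiveB, Matrix.of_apply, hiveC, Fin.val_mk]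
    rw [hive_entry_diag (u.1.1 : ℕ) (u.1.2 : ℕ) u.2.1 u.2.2.1]
    exact Int.cast_one
  have hdet : M.det = 1 := by
    rw [Matrix.det_of_upperTriangular (fun u v h => htri (show hiveKey n v < hiveKey n u from h))]
    exact Finset.prod_eq_one fun u _ => hdiag u
  have hunit : IsUnit M := (Matrix.isUnit_iff_isUnit_det M).mpr (by rw [hdet]; exact isUnit_one)
  have hrankM : M.rank = Fintype.card (HiveMutable n) := Matrix.rank_of_isUnit M hunit
  have hle1 : M.rank ≤ (hiveB n).rank := by
    have hmul : hiveB n * (1 : Matrix (HiveVertex n) (HiveVertex n) ℚ).submatrix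
        (Equiv.refl (HiveVertex n)) (hiveC n) = M := by
      rw [Matrix.mul_submatrix_one]
      simp [hM]
    rw [← hmul]
    exact Matrix.rank_mul_le_left _ _
  have hle2 : (hiveB n).rank ≤ Fintype.card (HiveMutable n) :=
    Matrix.rank_le_card_height _
  have hcard : Fintype.card (HiveMutable n) = (n - 1).choose 2 := card_hiveMutable n hn
  omega
end

section
/- Under the volume-preserving linear isomorphism φ (with (φg)(i,j) = Σ_{l≥j} g(i,l) for j≠0 and (φg)(i,0) = Σ_{k≥i,l} g(k,l)), the cone G_n of g-vectors maps onto the Littlewood–Richardson triangle cone LR_n; specifically, the inequalities defining LR_n pull back exactly to the inequalities defining G_n: h(i,j) ≥ 0 (ij≠0) corresponds to the nonnegativity of partial sums of g along straight NE paths and g(i,0) ≥ 0; inequality (2) of LR triangles corresponds to SE paths and g(i,j) ≥ 0 for i+j=n; inequality (3) corresponds to W paths and g(0,j) ≥ 0. -/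
open scoped Classical

namespace Stmt12

def del (n : ℕ) (p : ℕ × ℕ) : Prop :=
  p.1 + p.2 ≤ n ∧ p.1 + p.2 ≠ 0 ∧ ¬(p.1 = 0 ∧ p.2 = n) ∧ ¬(p.1 = n ∧ p.2 = 0)

@[simp] lemma del_mk (n i j : ℕ) :
    del n (i, j) ↔ (i + j ≤ n ∧ i + j ≠ 0 ∧ ¬(i = 0 ∧ j = n) ∧ ¬(i = n ∧ j = 0)) :=
  Iff.rfl

noncomputable def Φ (n : ℕ) (g : ℕ × ℕ → ℝ) : ℕ × ℕ → ℝ := fun p =>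
  if del n p then
    (if p.2 ≠ 0 then ∑ l ∈ Finset.Icc p.2 n, g (p.1, l)
     else ∑ x ∈ Finset.Icc p.1 n, ∑ l ∈ Finset.range (n + 1), g (x, l))
  else 0

noncomputable def ψ (n : ℕ) (h : ℕ × ℕ → ℝ) : ℕ × ℕ → ℝ
  | (i, 0) => if del n (i, 0) then h (i, 0) - h (i + 1, 0) - h (i, 1) else 0
  | (i, j + 1) => if del n (i, j + 1) then h (i, j + 1) - h (i, j + 2) else 0

lemma psi_not_del {n : ℕ} (h : ℕ × ℕ → ℝ) {p : ℕ × ℕ} (hp : ¬ del n p) :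
    ψ n h p = 0 := by
  obtain ⟨i, j⟩ := p
  cases j with
  | zero => simp [ψ, hp]
  | succ j => simp [ψ, hp]

lemma telescope (F : ℕ → ℝ) : ∀ b a, a ≤ b + 1 →
    ∑ l ∈ Finset.Icc a b, (F l - F (l + 1)) = F a - F (b + 1) := by
  intro b
  induction b with
  | zero =>
    intro a ha
    interval_cases a
    · simp
    · simp
  | succ b ih =>
    intro a ha
    rcases eq_or_lt_of_le ha with h | h
    · rw [Finset.Icc_eq_empty (by omega)]
      rw [← h]
      simp
    · have ha' : a ≤ b + 1 := by omega
      rw [Finset.sum_Icc_succ_top ha', ih a ha']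
      ring

lemma not_del_succ {n i l : ℕ} (hl : 1 ≤ l) (hd : ¬ del n (i, l)) : ¬ del n (i, l + 1) := by
  simp only [del_mk, and_true, true_and] at hd ⊢
  omega

lemma psi_eq {n : ℕ} (h : ℕ × ℕ → ℝ) (hsupp : ∀ p, ¬ del n p → h p = 0)
    (i l : ℕ) (hl : 1 ≤ l) :
    ψ n h (i, l) = h (i, l) - h (i, l + 1) := by
  obtain ⟨j, rfl⟩ : ∃ j, l = j + 1 := ⟨l - 1, by omega⟩
  by_cases hd : del n (i, j + 1)
  · simp [ψ, hd]
  · have h1 := hsupp _ hd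
    have h2 := hsupp _ (not_del_succ hl hd)
    simp [ψ, hd, h1, h2]

lemma h_zero_top {n : ℕ} (h : ℕ × ℕ → ℝ) (hsupp : ∀ p, ¬ del n p → h p = 0)
    (i m : ℕ) (hm : n < i + m) : h (i, m) = 0 := by
  apply hsupp
  simp only [del_mk, and_true, true_and]
  omega

lemma sum_psi_row {n : ℕ} (h : ℕ × ℕ → ℝ) (hsupp : ∀ p, ¬ del n p → h p = 0)
    (i a m : ℕ) (ha : 1 ≤ a) (ham : a ≤ m + 1) :
    ∑ l ∈ Finset.Icc a m, ψ n h (i, l) = h (i, a) - h (i, m + 1) := by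
  rw [← telescope (fun l => h (i, l)) m a ham]
  refine Finset.sum_congr rfl fun l hl => ?_
  have := Finset.mem_Icc.mp hl
  exact psi_eq h hsupp i l (by omega)

lemma h_eq_sum {n : ℕ} (h : ℕ × ℕ → ℝ) (hsupp : ∀ p, ¬ del n p → h p = 0)
    (a b : ℕ) (ha : 1 ≤ a) (hb : 1 ≤ b) (hab : a + b ≤ n) :
    h (a, b) = ∑ l ∈ Finset.Icc b (n - a), ψ n h (a, l) := by
  rw [sum_psi_row h hsupp a b (n - a) hb (by omega)]
  rw [h_zero_top h hsupp a (n - a + 1) (by omega)]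
  ring

lemma se_id {n : ℕ} (h : ℕ × ℕ → ℝ) (hsupp : ∀ p, ¬ del n p → h p = 0)
    (a b : ℕ) (hb : 1 ≤ b) :
    ∑ x ∈ Finset.range (a - b + 1), ψ n h (x, b)
      = ∑ x ∈ Finset.range (a - b + 1), h (x, b)
        - ∑ x ∈ Finset.range (a - b + 1), h (x, b + 1) := by
  rw [← Finset.sum_sub_distrib]
  exact Finset.sum_congr rfl fun x _ => psi_eq h hsupp x b hb

lemma w_id {n : ℕ} (h : ℕ × ℕ → ℝ) (hsupp : ∀ p, ¬ del n p → h p = 0)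
    (b : ℕ) (hb : 1 ≤ b) (a : ℕ) (hba : b ≤ a) (han : a ≤ n - 1) :
    ∑ s ∈ Finset.range b, ψ n h (a - s, s)
      = ∑ x ∈ Finset.range b, h (a - x, x)
        - ∑ x ∈ Finset.range (b + 1), h (a + 1 - x, x) := by
  induction b, hb using Nat.le_induction generalizing a with
  | base =>
    have hd : del n (a, 0) := by
      simp only [del_mk, and_true, true_and]; omega
    have e0 : ψ n h (a, 0) = h (a, 0) - h (a + 1, 0) - h (a, 1) := by
      simp [ψ, hd]
    rw [Finset.sum_range_one, Finset.sum_range_one,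
      Finset.sum_range_succ, Finset.sum_range_one]
    simp only [Nat.sub_zero, Nat.add_sub_cancel]
    rw [e0]
    ring
  | succ b hb ih =>
    rw [Finset.sum_range_succ, ih a (by omega) han,
      Finset.sum_range_succ (fun x => h (a - x, x)) b,
      Finset.sum_range_succ (fun x => h (a + 1 - x, x)) (b + 1),
      psi_eq h hsupp (a - b) b hb,
      show a + 1 - (b + 1) = a - b from by omega]
    ring

lemma range_split (m : ℕ) (f : ℕ → ℝ) :
    ∑ l ∈ Finset.range (m + 1), f l = f 0 + ∑ l ∈ Finset.Icc 1 m, f l := by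
  induction m with
  | zero => simp
  | succ m ih =>
    rw [Finset.sum_range_succ, ih, Finset.sum_Icc_succ_top (by omega : 1 ≤ m + 1)]
    ring

lemma psi_rowsum {n : ℕ} (h : ℕ × ℕ → ℝ) (hsupp : ∀ p, ¬ del n p → h p = 0)
    (x : ℕ) (hx : 1 ≤ x) :
    ∑ l ∈ Finset.range (n + 1), ψ n h (x, l) = h (x, 0) - h (x + 1, 0) := by
  rw [range_split]
  rw [sum_psi_row h hsupp x 1 n le_rfl (by omega)]
  rw [h_zero_top h hsupp x (n + 1) (by omega)]
  by_cases hd : del n (x, 0)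
  · have e0 : ψ n h (x, 0) = h (x, 0) - h (x + 1, 0) - h (x, 1) := by simp [ψ, hd]
    rw [e0]; ring
  · have hx' : n ≤ x := by simp only [del_mk, and_true, true_and] at hd; omega
    have e1 : h (x, 0) = 0 := hsupp _ hd
    have e2 : h (x + 1, 0) = 0 := hsupp _ (by simp only [del_mk, and_true, true_and]; omega)
    have e3 : h (x, 1) = 0 := h_zero_top h hsupp x 1 (by omega)
    have e0 : ψ n h (x, 0) = 0 := psi_not_del h hd
    rw [e0, e1, e2, e3]; ring

lemma phi_psi (n : ℕ) (h : ℕ × ℕ → ℝ) (hsupp : ∀ p, ¬ del n p → h p = 0) :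
    Φ n (ψ n h) = h := by
  funext p
  obtain ⟨i, j⟩ := p
  by_cases hd : del n (i, j)
  · by_cases hj : j = 0
    · subst hj
      have hi : 1 ≤ i ∧ i < n := by simp only [del_mk, and_true, true_and] at hd; omega
      show (if del n (i, 0) then
          (if (i, (0:ℕ)).2 ≠ 0 then ∑ l ∈ Finset.Icc (i, (0:ℕ)).2 n, ψ n h ((i, (0:ℕ)).1, l)
           else ∑ x ∈ Finset.Icc (i, (0:ℕ)).1 n, ∑ l ∈ Finset.range (n + 1), ψ n h (x, l))
        else 0) = h (i, 0)
      rw [if_pos hd, if_neg (by simp)]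
      calc ∑ x ∈ Finset.Icc i n, ∑ l ∈ Finset.range (n + 1), ψ n h (x, l)
          = ∑ x ∈ Finset.Icc i n, ((fun x => h (x, 0)) x - (fun x => h (x, 0)) (x + 1)) := by
            refine Finset.sum_congr rfl fun x hx => ?_
            have := Finset.mem_Icc.mp hx
            exact psi_rowsum h hsupp x (by omega)
        _ = h (i, 0) - h (n + 1, 0) := telescope (fun x => h (x, 0)) n i (by omega)
        _ = h (i, 0) := by rw [h_zero_top h hsupp (n + 1) 0 (by omega)]; ring
    · show (if del n (i, j) then
          (if (i, j).2 ≠ 0 then ∑ l ∈ Finset.Icc (i, j).2 n, ψ n h ((i, j).1, l)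
           else ∑ x ∈ Finset.Icc (i, j).1 n, ∑ l ∈ Finset.range (n + 1), ψ n h (x, l))
        else 0) = h (i, j)
      rw [if_pos hd, if_pos (show (i, j).2 ≠ 0 from hj)]
      have hjn : j ≤ n := by simp only [del_mk, and_true, true_and] at hd; omega
      rw [sum_psi_row h hsupp i j n (by omega) (by omega)]
      rw [h_zero_top h hsupp i (n + 1) (by omega)]
      ring
  · show (if del n (i, j) then _ else (0:ℝ)) = h (i, j)
    rw [if_neg hd]
    exact (hsupp _ hd).symm

lemma g_tail_zero {n : ℕ} (g : ℕ × ℕ → ℝ) (gsupp : ∀ p, ¬ del n p → g p = 0)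
    (i j : ℕ) (hj : 1 ≤ j) (hd : ¬ del n (i, j)) :
    ∑ l ∈ Finset.Icc j n, g (i, l) = 0 := by
  refine Finset.sum_eq_zero fun l hl => ?_
  have hm := Finset.mem_Icc.mp hl
  apply gsupp
  simp only [del_mk, and_true, true_and] at hd ⊢
  omega

lemma phi_val {n : ℕ} (g : ℕ × ℕ → ℝ) (gsupp : ∀ p, ¬ del n p → g p = 0)
    (i j : ℕ) (hj : 1 ≤ j) :
    Φ n g (i, j) = ∑ l ∈ Finset.Icc j n, g (i, l) := by
  by_cases hd : del n (i, j)
  · show (if del n (i, j) then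
        (if (i, j).2 ≠ 0 then ∑ l ∈ Finset.Icc (i, j).2 n, g ((i, j).1, l)
         else ∑ x ∈ Finset.Icc (i, j).1 n, ∑ l ∈ Finset.range (n + 1), g (x, l))
      else 0) = ∑ l ∈ Finset.Icc j n, g (i, l)
    rw [if_pos hd, if_pos (show (i, j).2 ≠ 0 from show j ≠ 0 by omega)]
  · show (if del n (i, j) then _ else (0:ℝ)) = ∑ l ∈ Finset.Icc j n, g (i, l)
    rw [if_neg hd]
    exact (g_tail_zero g gsupp i j hj hd).symm

lemma row_zero {n : ℕ} (g : ℕ × ℕ → ℝ) (gsupp : ∀ p, ¬ del n p → g p = 0)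
    (x : ℕ) (hx : n ≤ x) :
    ∑ l ∈ Finset.range (n + 1), g (x, l) = 0 := by
  refine Finset.sum_eq_zero fun l hl => ?_
  have := Finset.mem_range.mp hl
  apply gsupp
  simp only [del_mk, and_true, true_and]
  omega

lemma phi_val0 {n : ℕ} (g : ℕ × ℕ → ℝ) (gsupp : ∀ p, ¬ del n p → g p = 0)
    (i : ℕ) (hi : 1 ≤ i) :
    Φ n g (i, 0) = ∑ x ∈ Finset.Icc i n, ∑ l ∈ Finset.range (n + 1), g (x, l) := by
  by_cases hd : del n (i, 0)
  · show (if del n (i, 0) then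
        (if (i, (0:ℕ)).2 ≠ 0 then ∑ l ∈ Finset.Icc (i, (0:ℕ)).2 n, g ((i, (0:ℕ)).1, l)
         else ∑ x ∈ Finset.Icc (i, (0:ℕ)).1 n, ∑ l ∈ Finset.range (n + 1), g (x, l))
      else 0) = ∑ x ∈ Finset.Icc i n, ∑ l ∈ Finset.range (n + 1), g (x, l)
    rw [if_pos hd, if_neg (by simp)]
  · have hi' : n ≤ i := by simp only [del_mk, and_true, true_and] at hd; omega
    show (if del n (i, 0) then _ else (0:ℝ))
        = ∑ x ∈ Finset.Icc i n, ∑ l ∈ Finset.range (n + 1), g (x, l)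
    rw [if_neg hd]
    symm
    refine Finset.sum_eq_zero fun x hx => ?_
    exact row_zero g gsupp x (le_trans hi' (Finset.mem_Icc.mp hx).1)

lemma psi_phi (n : ℕ) (g : ℕ × ℕ → ℝ) (gsupp : ∀ p, ¬ del n p → g p = 0) :
    ψ n (Φ n g) = g := by
  funext p
  obtain ⟨i, j⟩ := p
  by_cases hd : del n (i, j)
  · by_cases hj : j = 0
    · subst hj
      have hi : 1 ≤ i ∧ i < n := by simp only [del_mk, and_true, true_and] at hd; omega
      have e0 : ψ n (Φ n g) (i, 0)
          = Φ n g (i, 0) - Φ n g (i + 1, 0) - Φ n g (i, 1) := by simp [ψ, hd]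
      rw [e0, phi_val0 g gsupp i (by omega), phi_val0 g gsupp (i + 1) (by omega),
        phi_val g gsupp i 1 le_rfl]
      rw [show Finset.Icc i n = insert i (Finset.Icc (i + 1) n) from by
        rw [Finset.Icc_add_one_left_eq_Ioc, Finset.Ioc_insert_left (by omega : i ≤ n)]]
      rw [Finset.sum_insert (by simp)]
      rw [range_split n (fun l => g (i, l))]
      ring
    · have hj' : 1 ≤ j := by omega
      have e0 : ψ n (Φ n g) (i, j) = Φ n g (i, j) - Φ n g (i, j + 1) :=
        psi_eq (Φ n g) (fun p hp => if_neg hp) i j hj'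
      rw [e0, phi_val g gsupp i j hj', phi_val g gsupp i (j + 1) (by omega)]
      have hjn : j ≤ n := by simp only [del_mk, and_true, true_and] at hd; omega
      rw [show Finset.Icc j n = insert j (Finset.Icc (j + 1) n) from by
        rw [Finset.Icc_add_one_left_eq_Ioc, Finset.Ioc_insert_left hjn]]
      rw [Finset.sum_insert (by simp)]
      ring
  · rw [psi_not_del (Φ n g) hd]
    exact (gsupp _ hd).symm

section Cones

variable {n : ℕ} (h : ℕ × ℕ → ℝ) (hsupp : ∀ p, ¬ del n p → h p = 0)

include hsupp

lemma LR1_of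
    (gfro : ∀ p : ℕ × ℕ, del n p ∧ (p.1 = 0 ∨ p.2 = 0 ∨ p.1 + p.2 = n) → 0 ≤ ψ n h p)
    (gNE : ∀ p : ℕ × ℕ, 1 ≤ p.1 ∧ 1 ≤ p.2 ∧ p.1 + p.2 + 1 ≤ n →
      0 ≤ ∑ l ∈ Finset.Icc p.2 (n - p.1), ψ n h (p.1, l)) :
    ∀ a b : ℕ, a ≠ 0 → b ≠ 0 → 0 ≤ h (a, b) := by
  intro a b ha hb
  by_cases hd : del n (a, b)
  · have hab : a + b ≤ n := by simp only [del_mk, and_true, true_and] at hd; omega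
    rw [h_eq_sum h hsupp a b (by omega) (by omega) hab]
    by_cases hdiag : a + b = n
    · rw [show n - a = b from by omega, Finset.Icc_self, Finset.sum_singleton]
      exact gfro (a, b) ⟨hd, Or.inr (Or.inr hdiag)⟩
    · exact gNE (a, b) ⟨by omega, by omega, by omega⟩
  · rw [hsupp _ hd]

lemma LR2_of
    (gfro : ∀ p : ℕ × ℕ, del n p ∧ (p.1 = 0 ∨ p.2 = 0 ∨ p.1 + p.2 = n) → 0 ≤ ψ n h p)
    (gSE : ∀ p : ℕ × ℕ, 1 ≤ p.1 ∧ 1 ≤ p.2 ∧ p.1 + p.2 + 1 ≤ n →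
      0 ≤ ∑ x ∈ Finset.range (p.1 + 1), ψ n h (x, p.2)) :
    ∀ a b : ℕ, 1 ≤ b → b ≤ a → a ≤ n - 1 →
      ∑ x ∈ Finset.range (a - b + 1), h (x, b + 1) ≤
      ∑ x ∈ Finset.range (a - b + 1), h (x, b) := by
  intro a b hb hba han
  have key : 0 ≤ ∑ x ∈ Finset.range (a - b + 1), ψ n h (x, b) := by
    rcases eq_or_lt_of_le hba with rfl | hlt
    · rw [show b - b + 1 = 1 from by omega, Finset.sum_range_one]
      exact gfro (0, b) ⟨by simp only [del_mk, and_true, true_and]; omega, Or.inl rfl⟩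
    · have := gSE (a - b, b) ⟨by omega, hb, by omega⟩
      simpa using this
  have := se_id h hsupp a b hb
  linarith

lemma LR3_of
    (gfro : ∀ p : ℕ × ℕ, del n p ∧ (p.1 = 0 ∨ p.2 = 0 ∨ p.1 + p.2 = n) → 0 ≤ ψ n h p)
    (gW : ∀ p : ℕ × ℕ, 1 ≤ p.1 ∧ 1 ≤ p.2 ∧ p.1 + p.2 + 1 ≤ n →
      0 ≤ ∑ t ∈ Finset.range (p.2 + 1), ψ n h (p.1 + t, p.2 - t)) :
    ∀ a b : ℕ, 1 ≤ b → b ≤ a → a ≤ n - 1 →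
      ∑ x ∈ Finset.range (b + 1), h (a + 1 - x, x) ≤
      ∑ x ∈ Finset.range b, h (a - x, x) := by
  intro a b hb hba han
  have key : 0 ≤ ∑ s ∈ Finset.range b, ψ n h (a - s, s) := by
    rcases eq_or_lt_of_le hb with rfl | hlt
    · rw [Finset.sum_range_one]
      exact gfro (a - 0, 0) ⟨by simp only [del_mk, and_true, true_and]; omega, Or.inr (Or.inl rfl)⟩
    · have hw := gW (a + 1 - b, b - 1) ⟨by omega, by omega, by omega⟩
      rw [show b - 1 + 1 = b from by omega] at hw
      rw [← Finset.sum_range_reflect (fun s => ψ n h (a - s, s)) b]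
      calc (0:ℝ) ≤ ∑ t ∈ Finset.range b, ψ n h (a + 1 - b + t, b - 1 - t) := hw
        _ = ∑ t ∈ Finset.range b, ψ n h (a - (b - 1 - t), b - 1 - t) := by
            refine Finset.sum_congr rfl fun t ht => ?_
            have := Finset.mem_range.mp ht
            rw [show a + 1 - b + t = a - (b - 1 - t) from by omega]
  have := w_id h hsupp b hb a hba han
  linarith

lemma Gfro_of
    (h1 : ∀ a b : ℕ, a ≠ 0 → b ≠ 0 → 0 ≤ h (a, b))
    (h2 : ∀ a b : ℕ, 1 ≤ b → b ≤ a → a ≤ n - 1 →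
      ∑ x ∈ Finset.range (a - b + 1), h (x, b + 1) ≤
      ∑ x ∈ Finset.range (a - b + 1), h (x, b))
    (h3 : ∀ a b : ℕ, 1 ≤ b → b ≤ a → a ≤ n - 1 →
      ∑ x ∈ Finset.range (b + 1), h (a + 1 - x, x) ≤
      ∑ x ∈ Finset.range b, h (a - x, x)) :
    ∀ p : ℕ × ℕ, del n p ∧ (p.1 = 0 ∨ p.2 = 0 ∨ p.1 + p.2 = n) → 0 ≤ ψ n h p := by
  rintro ⟨i, j⟩ ⟨hd, hcase⟩
  by_cases hj : j = 0
  · subst hj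
    have hi : 1 ≤ i ∧ i ≤ n - 1 := by simp only [del_mk, and_true, true_and] at hd; omega
    have h3' := h3 i 1 le_rfl (by omega) (by omega)
    rw [Finset.sum_range_succ, Finset.sum_range_one, Finset.sum_range_one] at h3'
    have e0 : ψ n h (i, 0) = h (i, 0) - h (i + 1, 0) - h (i, 1) := by simp [ψ, hd]
    rw [e0]
    have e1 : i + 1 - 0 = i + 1 := by omega
    have e2 : i + 1 - 1 = i := by omega
    have e3 : i - 0 = i := by omega
    rw [e1, e2, e3] at h3'
    linarith
  · have hj' : 1 ≤ j := by omega
    have e := psi_eq h hsupp i j hj'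
    rcases hcase with hi0 | hj0 | hdiag
    · subst hi0
      have hjn : j ≤ n - 1 := by simp only [del_mk, and_true, true_and] at hd; omega
      have h2' := h2 j j hj' le_rfl hjn
      rw [show j - j + 1 = 1 from by omega, Finset.sum_range_one, Finset.sum_range_one] at h2'
      rw [e]
      linarith
    · exact absurd hj0 hj
    · have hi0 : i ≠ 0 := by simp only [del_mk, and_true, true_and] at hd; omega
      rw [e, h_zero_top h hsupp i (j + 1) (by omega)]
      have := h1 i j hi0 hj
      linarith

lemma GNE_of
    (h1 : ∀ a b : ℕ, a ≠ 0 → b ≠ 0 → 0 ≤ h (a, b)) :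
    ∀ p : ℕ × ℕ, 1 ≤ p.1 ∧ 1 ≤ p.2 ∧ p.1 + p.2 + 1 ≤ n →
      0 ≤ ∑ l ∈ Finset.Icc p.2 (n - p.1), ψ n h (p.1, l) := by
  rintro ⟨i, j⟩ ⟨hi, hj, hij⟩
  rw [← h_eq_sum h hsupp i j hi hj (by omega)]
  exact h1 i j (by omega) (by omega)

lemma GSE_of
    (h2 : ∀ a b : ℕ, 1 ≤ b → b ≤ a → a ≤ n - 1 →
      ∑ x ∈ Finset.range (a - b + 1), h (x, b + 1) ≤
      ∑ x ∈ Finset.range (a - b + 1), h (x, b)) :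
    ∀ p : ℕ × ℕ, 1 ≤ p.1 ∧ 1 ≤ p.2 ∧ p.1 + p.2 + 1 ≤ n →
      0 ≤ ∑ x ∈ Finset.range (p.1 + 1), ψ n h (x, p.2) := by
  rintro ⟨i, j⟩ ⟨hi, hj, hij⟩
  have h2' := h2 (i + j) j hj (by omega) (by omega)
  have hid := se_id h hsupp (i + j) j hj
  rw [show i + j - j = i from by omega] at h2' hid
  rw [hid]
  linarith

lemma GW_of
    (h3 : ∀ a b : ℕ, 1 ≤ b → b ≤ a → a ≤ n - 1 →
      ∑ x ∈ Finset.range (b + 1), h (a + 1 - x, x) ≤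
      ∑ x ∈ Finset.range b, h (a - x, x)) :
    ∀ p : ℕ × ℕ, 1 ≤ p.1 ∧ 1 ≤ p.2 ∧ p.1 + p.2 + 1 ≤ n →
      0 ≤ ∑ t ∈ Finset.range (p.2 + 1), ψ n h (p.1 + t, p.2 - t) := by
  rintro ⟨i, j⟩ ⟨hi, hj, hij⟩
  have h3' := h3 (i + j) (j + 1) (by omega) (by omega) (by omega)
  have hw := w_id h hsupp (j + 1) (by omega) (i + j) (by omega) (by omega)
  rw [← Finset.sum_range_reflect (fun t => ψ n h (i + t, j - t)) (j + 1)]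
  have ecal : ∑ s ∈ Finset.range (j + 1), ψ n h (i + (j + 1 - 1 - s), j - (j + 1 - 1 - s))
      = ∑ s ∈ Finset.range (j + 1), ψ n h (i + j - s, s) := by
    refine Finset.sum_congr rfl fun s hs => ?_
    have := Finset.mem_range.mp hs
    rw [show i + (j + 1 - 1 - s) = i + j - s from by omega,
      show j - (j + 1 - 1 - s) = s from by omega]
  rw [ecal, hw]
  linarith

end Cones

end Stmt12

/-- Under the volume-preserving linear map `φ` (with `(φ g)(i,j) = Σ_{l ≥ j} g(i,l)`
for `j ≠ 0` and `(φ g)(i,0) = Σ_{k ≥ i, l} g(k,l)`), the cone `G_n` of `g`-vectors —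
defined by nonnegativity of `g` at frozen (boundary) vertices and nonnegativity of the
sums of `g` along the maximal straight paths through each mutable vertex (NE, SE, W
types) — maps onto the cone `LR_n` of Littlewood–Richardson triangles, defined by
inequalities (1)–(3).  Elements of `ℝ^{δ_n}` are encoded as real functions on `ℕ × ℕ`
supported on `δ_n`. -/
theorem stmt_12 (n : ℕ) (hn : 2 ≤ n)
    (δ : ℕ × ℕ → Prop)
    (hδ : δ = fun p => p.1 + p.2 ≤ n ∧ p.1 + p.2 ≠ 0 ∧
      ¬(p.1 = 0 ∧ p.2 = n) ∧ ¬(p.1 = n ∧ p.2 = 0))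
    (frozen mutbl : ℕ × ℕ → Prop)
    (hfrozen : frozen = fun p => δ p ∧ (p.1 = 0 ∨ p.2 = 0 ∨ p.1 + p.2 = n))
    (hmutbl : mutbl = fun p => 1 ≤ p.1 ∧ 1 ≤ p.2 ∧ p.1 + p.2 + 1 ≤ n)
    (G LR : Set (ℕ × ℕ → ℝ))
    (hG : G = {g | (∀ p, ¬ δ p → g p = 0) ∧
      (∀ p, frozen p → 0 ≤ g p) ∧
      (∀ p, mutbl p → 0 ≤ ∑ l ∈ Finset.Icc p.2 (n - p.1), g (p.1, l)) ∧
      (∀ p, mutbl p → 0 ≤ ∑ x ∈ Finset.range (p.1 + 1), g (x, p.2)) ∧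
      (∀ p, mutbl p → 0 ≤ ∑ t ∈ Finset.range (p.2 + 1), g (p.1 + t, p.2 - t))})
    (hLR : LR = {h | (∀ p, ¬ δ p → h p = 0) ∧
      (∀ a b : ℕ, a ≠ 0 → b ≠ 0 → 0 ≤ h (a, b)) ∧
      (∀ a b : ℕ, 1 ≤ b → b ≤ a → a ≤ n - 1 →
        ∑ x ∈ Finset.range (a - b + 1), h (x, b + 1) ≤
        ∑ x ∈ Finset.range (a - b + 1), h (x, b)) ∧
      (∀ a b : ℕ, 1 ≤ b → b ≤ a → a ≤ n - 1 →
        ∑ x ∈ Finset.range (b + 1), h (a + 1 - x, x) ≤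
        ∑ x ∈ Finset.range b, h (a - x, x))})
    (φ : (ℕ × ℕ → ℝ) → (ℕ × ℕ → ℝ))
    (hφ : φ = fun g p =>
      if δ p then
        (if p.2 ≠ 0 then ∑ l ∈ Finset.Icc p.2 n, g (p.1, l)
         else ∑ x ∈ Finset.Icc p.1 n, ∑ l ∈ Finset.range (n + 1), g (x, l))
      else 0) :
    φ '' G = LR := by
  subst hδ
  subst hfrozen
  subst hmutbl
  subst hG
  subst hLR
  have hφ' : φ = Stmt12.Φ n := hφ
  rw [hφ']
  apply Set.Subset.antisymm
  · rintro x ⟨g, ⟨gsupp, gfro, gNE, gSE, gW⟩, rfl⟩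
    have gsupp' : ∀ p, ¬ Stmt12.del n p → g p = 0 := gsupp
    have hsx : ∀ p, ¬ Stmt12.del n p → Stmt12.Φ n g p = 0 := fun p hp => if_neg hp
    have hpsi : Stmt12.ψ n (Stmt12.Φ n g) = g := Stmt12.psi_phi n g gsupp'
    have gfro' : ∀ p : ℕ × ℕ,
        Stmt12.del n p ∧ (p.1 = 0 ∨ p.2 = 0 ∨ p.1 + p.2 = n) →
        0 ≤ Stmt12.ψ n (Stmt12.Φ n g) p := by rw [hpsi]; exact gfro
    have gNE' : ∀ p : ℕ × ℕ, 1 ≤ p.1 ∧ 1 ≤ p.2 ∧ p.1 + p.2 + 1 ≤ n →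
        0 ≤ ∑ l ∈ Finset.Icc p.2 (n - p.1), Stmt12.ψ n (Stmt12.Φ n g) (p.1, l) := by
      rw [hpsi]; exact gNE
    have gSE' : ∀ p : ℕ × ℕ, 1 ≤ p.1 ∧ 1 ≤ p.2 ∧ p.1 + p.2 + 1 ≤ n →
        0 ≤ ∑ x ∈ Finset.range (p.1 + 1), Stmt12.ψ n (Stmt12.Φ n g) (x, p.2) := by
      rw [hpsi]; exact gSE
    have gW' : ∀ p : ℕ × ℕ, 1 ≤ p.1 ∧ 1 ≤ p.2 ∧ p.1 + p.2 + 1 ≤ n →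
        0 ≤ ∑ t ∈ Finset.range (p.2 + 1), Stmt12.ψ n (Stmt12.Φ n g) (p.1 + t, p.2 - t) := by
      rw [hpsi]; exact gW
    exact ⟨fun p hp => if_neg hp,
      Stmt12.LR1_of (Stmt12.Φ n g) hsx gfro' gNE',
      Stmt12.LR2_of (Stmt12.Φ n g) hsx gfro' gSE',
      Stmt12.LR3_of (Stmt12.Φ n g) hsx gfro' gW'⟩
  · rintro h ⟨hsupp, h1, h2, h3⟩
    have hsupp' : ∀ p, ¬ Stmt12.del n p → h p = 0 := hsupp
    exact ⟨Stmt12.ψ n h,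
      ⟨fun p hp => Stmt12.psi_not_del h hp,
       Stmt12.Gfro_of h hsupp' h1 h2 h3,
       Stmt12.GNE_of h hsupp' h1,
       Stmt12.GSE_of h hsupp' h2,
       Stmt12.GW_of h hsupp' h3⟩,
      Stmt12.phi_psi n h hsupp'⟩
end
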